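/- Let ν ≥ 2 be an integer, let φ ∈ L²(ℝ) vanish almost everywhere outside [−ν+1, ν], and let j ∈ ℕ satisfy 2^j ≥ 2ν. For m ∈ {2^j − ν, …, 2^j − 1}, define the periodized function φ^per_{j,m} : [0,1] → ℝ by φ^per_{j,m}(x) = φ_{j,m}(x) + φ_{j, m − 2^j}(x), where φ_{j,k}(x) := 2^{j/2} φ(2^j x − k). Then for every n ∈ ℕ: ∫₀¹ φ^per_{j,m}(x) w_n(x) dx = Σ_{l=−ν+1}^{2^j−m−1} 2^{−j/2} w_n((l+m)/2^j) · ∫₀¹ φ(x+l) w_{⌊n/2^j⌋}(x) dx + Σ_{l=2^j−m}^{ν−1} 2^{−j/2} w_n((l+m−2^j)/2^j) · ∫₀¹ φ(x+l) w_{⌊n/2^j⌋}(x) dx (sums over empty index ranges are zero). -/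

import Mathlib

open MeasureTheory

/-- `natDigit n i` is the `i`-th binary digit `n^(i)` (for `i ≥ 1`) of `n ∈ ℕ`,
so that `n = Σ_{i ≥ 1} n^(i) 2^(i-1)`. -/
def natDigit (n i : ℕ) : ℕ := (n / 2 ^ (i - 1)) % 2

/-- `dyadicDigit x i` is the `i`-th dyadic digit `x^(i) = ⌊2^i x⌋ − 2⌊2^(i−1) x⌋`
(for `i ≥ 1`) of `x ∈ [0,1)`. -/
noncomputable def dyadicDigit (x : ℝ) (i : ℕ) : ℤ :=
  ⌊(2 : ℝ) ^ i * x⌋ - 2 * ⌊(2 : ℝ) ^ (i - 1) * x⌋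

/-- The sequency-ordered Walsh function
`w_n(x) = (−1)^{Σ_{i≥1} (n^(i) + n^(i+1)) x^(i)}`; the sum is finite since
`n^(i) = 0` for `i > n`, so it may be truncated at `i = n + 1`. -/
noncomputable def walsh (n : ℕ) (x : ℝ) : ℝ :=
  (-1 : ℝ) ^ ∑ i ∈ Finset.Icc 1 (n + 1),
    (natDigit n i + natDigit n (i + 1)) * (dyadicDigit x i).toNat

/-- The dyadic XOR `x ⊕ y := Σ_{i≥1} |x^(i) − y^(i)| 2^{−i}` of `x, y ∈ [0,1)`. -/
noncomputable def dyadicXor (x y : ℝ) : ℝ :=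
  ∑' i : ℕ, |(dyadicDigit x (i + 1) : ℝ) - (dyadicDigit y (i + 1) : ℝ)| / 2 ^ (i + 1)

lemma natDigit_eq_zero {n i : ℕ} (h : n + 1 ≤ i) : natDigit n i = 0 := by
  unfold natDigit
  have h1 : n < 2 ^ (i - 1) :=
    lt_of_lt_of_le (Nat.lt_two_pow_self (n := n)) (Nat.pow_le_pow_right (by norm_num) (by omega))
  simp [Nat.div_eq_of_lt h1]

lemma natDigit_div_pow (n j i : ℕ) (h : 1 ≤ i) : natDigit (n / 2 ^ j) i = natDigit n (i + j) := by
  unfold natDigit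
  rw [Nat.div_div_eq_div_mul, ← pow_add]
  have : j + (i - 1) = i + j - 1 := by omega
  rw [this]

lemma walsh_eq_truncate (n N : ℕ) (hN : n + 1 ≤ N) (x : ℝ) :
    walsh n x = (-1 : ℝ) ^ ∑ i ∈ Finset.Icc 1 N,
      (natDigit n i + natDigit n (i + 1)) * (dyadicDigit x i).toNat := by
  unfold walsh
  congr 1
  apply Finset.sum_subset
  · apply Finset.Icc_subset_Icc_right hN
  · intro i hi hni
    simp only [Finset.mem_Icc] at hi hni
    have h1 : n + 1 < i := by omega
    rw [natDigit_eq_zero (by omega), natDigit_eq_zero (by omega)]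
    simp

lemma floor_add_div_pow (k : ℕ) (t : ℝ) (ht0 : 0 ≤ t) (ht1 : t < 1) (M : ℕ) :
    ⌊((k : ℝ) + t) / 2 ^ M⌋ = (k : ℤ) / 2 ^ M := by
  have h2 : (0:ℝ) < 2 ^ M := by positivity
  obtain ⟨q, r, hr, hk⟩ : ∃ q r : ℕ, r < 2 ^ M ∧ k = 2 ^ M * q + r :=
    ⟨k / 2 ^ M, k % 2 ^ M, Nat.mod_lt _ (by positivity), (Nat.div_add_mod k (2 ^ M)).symm⟩
  subst hk
  have hcast : ((2 ^ M * q + r : ℕ) : ℤ) / 2 ^ M = (q : ℤ) := by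
    push_cast
    rw [mul_comm, add_comm, Int.add_mul_ediv_right _ _ (by positivity : (2:ℤ) ^ M ≠ 0)]
    rw [Int.ediv_eq_zero_of_lt (Int.natCast_nonneg r) (by exact_mod_cast hr)]
    simp
  rw [hcast, Int.floor_eq_iff]
  have hrR : (r : ℝ) + 1 ≤ 2 ^ M := by exact_mod_cast hr
  constructor
  · rw [le_div_iff₀ h2]; push_cast; nlinarith
  · rw [div_lt_iff₀ h2]; push_cast; nlinarith

lemma pow_mul_div_pow (k t : ℝ) {i j : ℕ} (hij : i ≤ j) :
    (2:ℝ) ^ i * ((k + t) / 2 ^ j) = (k + t) / 2 ^ (j - i) := by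
  have h : (2:ℝ) ^ j = 2 ^ (j - i) * 2 ^ i := by rw [← pow_add]; congr 1; omega
  rw [h]
  have h1 : (2:ℝ) ^ i ≠ 0 := by positivity
  have h2 : (2:ℝ) ^ (j - i) ≠ 0 := by positivity
  field_simp

lemma floor_scaled_low (k : ℕ) (t : ℝ) (ht0 : 0 ≤ t) (ht1 : t < 1) {i j : ℕ} (hij : i ≤ j) :
    ⌊(2:ℝ) ^ i * (((k : ℝ) + t) / 2 ^ j)⌋ = (k : ℤ) / 2 ^ (j - i) := by
  rw [pow_mul_div_pow _ _ hij, floor_add_div_pow k t ht0 ht1]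

lemma floor_scaled_high (k : ℕ) (t : ℝ) {i j : ℕ} (hij : j ≤ i) :
    ⌊(2:ℝ) ^ i * (((k : ℝ) + t) / 2 ^ j)⌋ = 2 ^ (i - j) * k + ⌊(2:ℝ) ^ (i - j) * t⌋ := by
  have h : (2:ℝ) ^ i * (((k : ℝ) + t) / 2 ^ j) = ((2 ^ (i - j) * k : ℕ) : ℝ) + 2 ^ (i - j) * t := by
    have hj : (2:ℝ) ^ i = 2 ^ (i - j) * 2 ^ j := by rw [← pow_add]; congr 1; omega
    have h2 : (2:ℝ) ^ j ≠ 0 := by positivity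
    push_cast
    field_simp [hj]
    rw [hj]
    ring
  rw [h, Int.floor_natCast_add]
  push_cast
  ring

lemma dyadicDigit_cell_low (k : ℕ) {t : ℝ} (ht0 : 0 ≤ t) (ht1 : t < 1) {i j : ℕ}
    (h1 : 1 ≤ i) (hij : i ≤ j) :
    dyadicDigit (((k : ℝ) + t) / 2 ^ j) i = dyadicDigit ((k : ℝ) / 2 ^ j) i := by
  have hk : (k : ℝ) / 2 ^ j = ((k : ℝ) + 0) / 2 ^ j := by ring
  unfold dyadicDigit
  rw [hk, floor_scaled_low k t ht0 ht1 hij, floor_scaled_low k 0 le_rfl one_pos hij,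
    floor_scaled_low k t ht0 ht1 (by omega : i - 1 ≤ j),
    floor_scaled_low k 0 le_rfl one_pos (by omega : i - 1 ≤ j)]

lemma dyadicDigit_cell_high (k : ℕ) {t : ℝ} {i j : ℕ} (hij : j + 1 ≤ i) :
    dyadicDigit (((k : ℝ) + t) / 2 ^ j) i = dyadicDigit t (i - j) := by
  unfold dyadicDigit
  rw [floor_scaled_high k t (by omega : j ≤ i), floor_scaled_high k t (by omega : j ≤ i - 1)]
  have e1 : i - 1 - j = i - j - 1 := by omega
  have e2 : i - j = (i - j - 1) + 1 := by omega
  rw [e1, e2, pow_succ]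
  push_cast
  ring

lemma dyadicDigit_dyadic_high (k : ℕ) {i j : ℕ} (hij : j + 1 ≤ i) :
    dyadicDigit ((k : ℝ) / 2 ^ j) i = 0 := by
  have hk : (k : ℝ) / 2 ^ j = ((k : ℝ) + 0) / 2 ^ j := by ring
  rw [hk, dyadicDigit_cell_high k hij]
  unfold dyadicDigit
  simp

lemma walsh_factor (n j k : ℕ) {t : ℝ} (ht0 : 0 ≤ t) (ht1 : t < 1) :
    walsh n (((k : ℝ) + t) / 2 ^ j) = walsh n ((k : ℝ) / 2 ^ j) * walsh (n / 2 ^ j) t := by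
  have hN : n + 1 ≤ n + j + 1 := by omega
  rw [walsh_eq_truncate n (n + j + 1) hN, walsh_eq_truncate n (n + j + 1) hN,
    walsh_eq_truncate (n / 2 ^ j) (n + 1) (by have := Nat.div_le_self n (2 ^ j); omega)]
  rw [← pow_add]
  congr 1
  rw [← Finset.sum_filter_add_sum_filter_not (Finset.Icc 1 (n + j + 1)) (· ≤ j)]
  have hA : ∀ i ∈ (Finset.Icc 1 (n + j + 1)).filter (· ≤ j),
      (natDigit n i + natDigit n (i + 1)) * (dyadicDigit (((k : ℝ) + t) / 2 ^ j) i).toNat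
      = (natDigit n i + natDigit n (i + 1)) * (dyadicDigit ((k : ℝ) / 2 ^ j) i).toNat := by
    intro i hi
    simp only [Finset.mem_filter, Finset.mem_Icc, decide_eq_true_eq] at hi
    rw [dyadicDigit_cell_low k ht0 ht1 hi.1.1 hi.2]
  rw [Finset.sum_congr rfl hA]
  congr 1
  · apply Finset.sum_subset (Finset.filter_subset _ _)
    intro i hi hni
    simp only [Finset.mem_filter, Finset.mem_Icc, decide_eq_true_eq, not_and, not_le] at hi hni
    rw [dyadicDigit_dyadic_high k (by omega : j + 1 ≤ i)]
    simp
  · have hfilter : (Finset.Icc 1 (n + j + 1)).filter (fun i => ¬ (i ≤ j))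
        = Finset.Icc (j + 1) (n + j + 1) := by
      ext i
      simp only [Finset.mem_filter, Finset.mem_Icc, not_le]
      omega
    rw [hfilter]
    apply Finset.sum_nbij' (fun i => i - j) (fun i => i + j)
    · intro a ha
      simp only [Finset.mem_Icc] at ha ⊢
      omega
    · intro a ha
      simp only [Finset.mem_Icc] at ha ⊢
      omega
    · intro a ha
      simp only [Finset.mem_Icc] at ha
      omega
    · intro a ha
      simp only [Finset.mem_Icc] at ha
      omega
    · intro a ha
      simp only [Finset.mem_Icc] at ha
      rw [dyadicDigit_cell_high k (by omega : j + 1 ≤ a)]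
      rw [natDigit_div_pow n j (a - j) (by omega), natDigit_div_pow n j (a - j + 1) (by omega)]
      have e1 : a - j + j = a := by omega
      have e2 : a - j + 1 + j = a + 1 := by omega
      rw [e1, e2]

lemma walsh_measurable (n : ℕ) : Measurable (walsh n) := by
  have hd : ∀ i : ℕ, Measurable fun x : ℝ => dyadicDigit x i := by
    intro i
    unfold dyadicDigit
    have hm1 : Measurable fun x : ℝ => (2:ℝ) ^ i * x := measurable_id.const_mul _
    have hm2 : Measurable fun x : ℝ => (2:ℝ) ^ (i - 1) * x := measurable_id.const_mul _
    exact (Int.measurable_floor.comp hm1).sub ((Int.measurable_floor.comp hm2).const_mul 2)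
  have he : Measurable fun x : ℝ => ∑ i ∈ Finset.Icc 1 (n + 1),
      (natDigit n i + natDigit n (i + 1)) * (dyadicDigit x i).toNat := by
    apply Finset.measurable_sum
    intro i _
    have ht : Measurable Int.toNat := measurable_from_top
    exact (ht.comp (hd i)).const_mul _
  have hg : Measurable fun e : ℕ => (-1 : ℝ) ^ e := measurable_from_top
  exact hg.comp he

lemma walsh_norm_le (n : ℕ) (x : ℝ) : ‖walsh n x‖ ≤ 1 := by
  simp [walsh, norm_pow]

lemma phi_II {φ : ℝ → ℝ} (hL2 : MemLp φ 2 volume) (a b : ℝ) :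
    IntervalIntegrable φ volume a b := by
  rw [intervalIntegrable_iff]
  have h1 : MemLp φ 2 (volume.restrict (Set.uIoc a b)) := hL2.restrict _
  haveI : IsFiniteMeasure (volume.restrict (Set.uIoc a b)) := by
    constructor
    rw [Measure.restrict_apply_univ]
    exact measure_Ioc_lt_top
  exact memLp_one_iff_integrable.mp (h1.mono_exponent (by norm_num))

lemma phi_comp_II {φ : ℝ → ℝ} (hL2 : MemLp φ 2 volume) {c : ℝ} (hc : c ≠ 0) (d a b : ℝ) :
    IntervalIntegrable (fun x => φ (c * x + d)) volume a b := by
  have h1 : ∀ p q : ℝ, IntervalIntegrable (fun x => φ (x + d)) volume p q := by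
    intro p q
    have := (phi_II hL2 (p + d) (q + d)).comp_add_right d
    simpa using this
  have h2 := (h1 (c * a) (c * b)).comp_mul_left (c := c)
  simpa [mul_div_cancel_left₀, hc] using h2

lemma phiwalsh_II' {φ : ℝ → ℝ} (hL2 : MemLp φ 2 volume) {c : ℝ} (hc : c ≠ 0)
    (d : ℝ) (nn : ℕ) (a b : ℝ) :
    IntervalIntegrable (fun x => φ (c * x + d) * walsh nn x) volume a b := by
  rw [intervalIntegrable_iff]
  have h := phi_comp_II hL2 hc d a b
  rw [intervalIntegrable_iff] at h
  have h2 : Integrable (fun x => walsh nn x * φ (c * x + d))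
      (volume.restrict (Set.uIoc a b)) :=
    h.bdd_mul ((walsh_measurable nn).aestronglyMeasurable) (c := 1) (Filter.Eventually.of_forall fun x => walsh_norm_le nn x)
  have heq : (fun x => φ (c * x + d) * walsh nn x)
      = fun x => walsh nn x * φ (c * x + d) := by funext x; ring
  rw [heq]
  exact h2

lemma phiwalsh_II {φ : ℝ → ℝ} (hL2 : MemLp φ 2 volume) (d : ℝ) (nn : ℕ) (a b : ℝ) :
    IntervalIntegrable (fun x => φ (x + d) * walsh nn x) volume a b := by
  have := phiwalsh_II' hL2 (one_ne_zero (α := ℝ)) d nn a b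
  simpa using this

lemma ae_ne_one : ∀ᵐ t : ℝ, t ≠ (1 : ℝ) := by
  rw [ae_iff]
  have h : {t : ℝ | ¬ t ≠ 1} = {(1 : ℝ)} := by ext t; simp
  rw [h]
  exact measure_singleton 1

lemma cell_integral {φ : ℝ → ℝ} (hL2 : MemLp φ 2 volume) (n j m k : ℕ) :
    ∫ x in ((k : ℝ) / 2 ^ j)..(((k : ℝ) + 1) / 2 ^ j),
        ((2 : ℝ) ^ ((j : ℝ) / 2) * φ (2 ^ j * x - m) +
          (2 : ℝ) ^ ((j : ℝ) / 2) * φ (2 ^ j * x - ((m : ℝ) - 2 ^ j))) * walsh n x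
      = (2 : ℝ) ^ (-(j : ℝ) / 2) * walsh n ((k : ℝ) / 2 ^ j) *
        ((∫ x in (0 : ℝ)..1, φ (x + ((k : ℝ) - m)) * walsh (n / 2 ^ j) x) +
         (∫ x in (0 : ℝ)..1, φ (x + ((k : ℝ) - m + 2 ^ j)) * walsh (n / 2 ^ j) x)) := by
  have h2j : (2 : ℝ) ^ j ≠ 0 := by positivity
  set g : ℝ → ℝ := fun x =>
      ((2 : ℝ) ^ ((j : ℝ) / 2) * φ (2 ^ j * x - m) +
        (2 : ℝ) ^ ((j : ℝ) / 2) * φ (2 ^ j * x - ((m : ℝ) - 2 ^ j))) * walsh n x with hg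
  have hchange : ∫ t in (0 : ℝ)..1, g ((t + k) / 2 ^ j)
      = (2 : ℝ) ^ j • ∫ x in ((k : ℝ) / 2 ^ j)..(((k : ℝ) + 1) / 2 ^ j), g x := by
    have h1 := intervalIntegral.integral_comp_add_right (a := (0:ℝ)) (b := 1)
      (fun u => g (u / 2 ^ j)) (k : ℝ)
    have h2 := intervalIntegral.integral_comp_div (a := (0:ℝ) + k) (b := (1:ℝ) + k)
      (f := g) (c := (2:ℝ) ^ j) h2j
    rw [h1, h2]
    norm_num [add_comm]
  have hae : ∀ᵐ t : ℝ, t ∈ Set.uIoc (0 : ℝ) 1 →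
      g ((t + k) / 2 ^ j) = walsh n ((k : ℝ) / 2 ^ j) *
        (((2 : ℝ) ^ ((j : ℝ) / 2) * φ (t + ((k : ℝ) - m)) +
          (2 : ℝ) ^ ((j : ℝ) / 2) * φ (t + ((k : ℝ) - m + 2 ^ j))) * walsh (n / 2 ^ j) t) := by
    filter_upwards [ae_ne_one] with t htne htI
    rw [Set.uIoc_of_le (by norm_num : (0:ℝ) ≤ 1)] at htI
    have ht0 : 0 ≤ t := le_of_lt htI.1
    have ht1 : t < 1 := lt_of_le_of_ne htI.2 htne
    have harg : (t + (k : ℝ)) / 2 ^ j = ((k : ℝ) + t) / 2 ^ j := by ring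
    rw [hg]
    simp only
    rw [harg, walsh_factor n j k ht0 ht1,
      show (2:ℝ) ^ j * (((k : ℝ) + t) / 2 ^ j) - m = t + ((k : ℝ) - m) by field_simp; ring,
      show (2:ℝ) ^ j * (((k : ℝ) + t) / 2 ^ j) - ((m : ℝ) - 2 ^ j)
        = t + ((k : ℝ) - m + 2 ^ j) by field_simp; ring]
    ring
  have hint := intervalIntegral.integral_congr_ae hae
  have hsplit : ∫ t in (0:ℝ)..1,
      walsh n ((k : ℝ) / 2 ^ j) *
        (((2 : ℝ) ^ ((j : ℝ) / 2) * φ (t + ((k : ℝ) - m)) +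
          (2 : ℝ) ^ ((j : ℝ) / 2) * φ (t + ((k : ℝ) - m + 2 ^ j))) * walsh (n / 2 ^ j) t)
      = walsh n ((k : ℝ) / 2 ^ j) * ((2 : ℝ) ^ ((j : ℝ) / 2) *
          (∫ x in (0 : ℝ)..1, φ (x + ((k : ℝ) - m)) * walsh (n / 2 ^ j) x) +
        (2 : ℝ) ^ ((j : ℝ) / 2) *
          (∫ x in (0 : ℝ)..1, φ (x + ((k : ℝ) - m + 2 ^ j)) * walsh (n / 2 ^ j) x)) := by
    rw [intervalIntegral.integral_const_mul]
    congr 1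
    have hi1 := phiwalsh_II hL2 ((k : ℝ) - m) (n / 2 ^ j) 0 1
    have hi2 := phiwalsh_II hL2 ((k : ℝ) - m + 2 ^ j) (n / 2 ^ j) 0 1
    have heq : (fun t => ((2 : ℝ) ^ ((j : ℝ) / 2) * φ (t + ((k : ℝ) - m)) +
          (2 : ℝ) ^ ((j : ℝ) / 2) * φ (t + ((k : ℝ) - m + 2 ^ j))) * walsh (n / 2 ^ j) t)
        = fun t => (2 : ℝ) ^ ((j : ℝ) / 2) * (φ (t + ((k : ℝ) - m)) * walsh (n / 2 ^ j) t) +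
            (2 : ℝ) ^ ((j : ℝ) / 2) * (φ (t + ((k : ℝ) - m + 2 ^ j)) * walsh (n / 2 ^ j) t) := by
      funext t; ring
    rw [heq, intervalIntegral.integral_add (hi1.const_mul _) (hi2.const_mul _),
      intervalIntegral.integral_const_mul, intervalIntegral.integral_const_mul]
  have hpow : ((2 : ℝ) ^ j)⁻¹ * (2 : ℝ) ^ ((j : ℝ) / 2) = (2 : ℝ) ^ (-(j : ℝ) / 2) := by
    rw [← Real.rpow_natCast 2 j, ← Real.rpow_neg (by norm_num : (0:ℝ) ≤ 2),
      ← Real.rpow_add (by norm_num : (0:ℝ) < 2)]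
    congr 1
    ring
  have hmain : ∫ x in ((k : ℝ) / 2 ^ j)..(((k : ℝ) + 1) / 2 ^ j), g x
      = ((2 : ℝ) ^ j)⁻¹ * (walsh n ((k : ℝ) / 2 ^ j) * ((2 : ℝ) ^ ((j : ℝ) / 2) *
          (∫ x in (0 : ℝ)..1, φ (x + ((k : ℝ) - m)) * walsh (n / 2 ^ j) x) +
        (2 : ℝ) ^ ((j : ℝ) / 2) *
          (∫ x in (0 : ℝ)..1, φ (x + ((k : ℝ) - m + 2 ^ j)) * walsh (n / 2 ^ j) x))) := by
    rw [← hsplit, ← hint, hchange]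
    rw [smul_eq_mul, ← mul_assoc, inv_mul_cancel₀ h2j, one_mul]
  rw [hmain]
  rw [← hpow]
  ring

lemma integral_supp_zero {ν : ℕ} {φ : ℝ → ℝ}
    (hsupp : ∀ᵐ x : ℝ, x ∉ Set.Icc (-(ν : ℝ) + 1) (ν : ℝ) → φ x = 0)
    (nn : ℕ) (c : ℝ) (hc : c ≤ -(ν : ℝ) ∨ (ν : ℝ) ≤ c) :
    ∫ x in (0:ℝ)..1, φ (x + c) * walsh nn x = 0 := by
  have hsupp' : ∀ᵐ x : ℝ, (x + c) ∉ Set.Icc (-(ν : ℝ) + 1) (ν : ℝ) → φ (x + c) = 0 :=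
    (measurePreserving_add_right volume c).quasiMeasurePreserving.ae hsupp
  have hae : ∀ᵐ x : ℝ, x ∈ Set.uIoc (0:ℝ) 1 → φ (x + c) * walsh nn x = (fun _ => (0:ℝ)) x := by
    filter_upwards [hsupp', ae_ne_one] with x hx hxne hxI
    rw [Set.uIoc_of_le (by norm_num : (0:ℝ) ≤ 1)] at hxI
    have hx0 : 0 < x := hxI.1
    have hx1 : x < 1 := lt_of_le_of_ne hxI.2 hxne
    have h1 : x + c ∉ Set.Icc (-(ν : ℝ) + 1) (ν : ℝ) := by
      rw [Set.mem_Icc]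
      push_neg
      rcases hc with h | h
      · intro habs
        linarith
      · intro _
        linarith
    rw [hx h1, zero_mul]
  rw [intervalIntegral.integral_congr_ae hae]
  exact intervalIntegral.integral_zero


/-- Right-edge periodized scaling functions: for `ν ≥ 2`,
`φ ∈ L²(ℝ)` supported in `[−ν+1, ν]`, `2^j ≥ 2ν` and `2^j − ν ≤ m ≤ 2^j − 1`, the
Walsh coefficients of `φ^per_{j,m} = φ_{j,m} + φ_{j,m−2^j}` on `[0,1]` satisfy the
stated two-sum formula. -/
theorem walsh_periodic_right_edge (ν : ℕ) (hν : 2 ≤ ν) (φ : ℝ → ℝ)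
    (hL2 : MemLp φ 2 volume)
    (hsupp : ∀ᵐ x : ℝ, x ∉ Set.Icc (-(ν : ℝ) + 1) (ν : ℝ) → φ x = 0)
    (j : ℕ) (hj : 2 * ν ≤ 2 ^ j) (m : ℕ) (hm1 : 2 ^ j ≤ m + ν) (hm2 : m < 2 ^ j)
    (n : ℕ) :
    ∫ x in (0 : ℝ)..1,
        ((2 : ℝ) ^ ((j : ℝ) / 2) * φ (2 ^ j * x - m) +
          (2 : ℝ) ^ ((j : ℝ) / 2) * φ (2 ^ j * x - ((m : ℝ) - 2 ^ j))) * walsh n x =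
      (∑ l ∈ Finset.Icc (-(ν : ℤ) + 1) (2 ^ j - (m : ℤ) - 1),
        (2 : ℝ) ^ (-(j : ℝ) / 2) * walsh n (((l : ℝ) + m) / 2 ^ j) *
          ∫ x in (0 : ℝ)..1, φ (x + l) * walsh (n / 2 ^ j) x) +
      ∑ l ∈ Finset.Icc (2 ^ j - (m : ℤ)) ((ν : ℤ) - 1),
        (2 : ℝ) ^ (-(j : ℝ) / 2) * walsh n (((l : ℝ) + m - 2 ^ j) / 2 ^ j) *
          ∫ x in (0 : ℝ)..1, φ (x + l) * walsh (n / 2 ^ j) x := by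
  have h2j : (2 : ℝ) ^ j ≠ 0 := by positivity
  -- Step 1: split [0,1] into dyadic cells
  have hgint : ∀ a b : ℝ, IntervalIntegrable (fun x =>
      ((2 : ℝ) ^ ((j : ℝ) / 2) * φ (2 ^ j * x - m) +
        (2 : ℝ) ^ ((j : ℝ) / 2) * φ (2 ^ j * x - ((m : ℝ) - 2 ^ j))) * walsh n x)
      volume a b := by
    intro a b
    have h1 : IntervalIntegrable (fun x => φ ((2:ℝ) ^ j * x - (m:ℝ)) * walsh n x) volume a b := by
      have := phiwalsh_II' hL2 h2j (-(m:ℝ)) n a b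
      simpa [sub_eq_add_neg] using this
    have h2 : IntervalIntegrable
        (fun x => φ ((2:ℝ) ^ j * x - ((m:ℝ) - 2 ^ j)) * walsh n x) volume a b := by
      have := phiwalsh_II' hL2 h2j (-((m:ℝ) - 2 ^ j)) n a b
      simpa [sub_eq_add_neg] using this
    have heq : (fun x =>
        ((2 : ℝ) ^ ((j : ℝ) / 2) * φ (2 ^ j * x - m) +
          (2 : ℝ) ^ ((j : ℝ) / 2) * φ (2 ^ j * x - ((m : ℝ) - 2 ^ j))) * walsh n x)
        = fun x => (2 : ℝ) ^ ((j : ℝ) / 2) * (φ ((2:ℝ) ^ j * x - (m:ℝ)) * walsh n x) +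
            (2 : ℝ) ^ ((j : ℝ) / 2) * (φ ((2:ℝ) ^ j * x - ((m:ℝ) - 2 ^ j)) * walsh n x) := by
      funext x; ring
    rw [heq]
    exact (h1.const_mul _).add (h2.const_mul _)
  have hsum := intervalIntegral.sum_integral_adjacent_intervals
    (a := fun k : ℕ => (k : ℝ) / 2 ^ j) (μ := volume)
    (f := fun x =>
      ((2 : ℝ) ^ ((j : ℝ) / 2) * φ (2 ^ j * x - m) +
        (2 : ℝ) ^ ((j : ℝ) / 2) * φ (2 ^ j * x - ((m : ℝ) - 2 ^ j))) * walsh n x)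
    (n := 2 ^ j) (fun k _ => hgint _ _)
  push_cast at hsum
  rw [zero_div, div_self h2j] at hsum
  rw [← hsum]
  rw [Finset.sum_congr rfl (fun k _ => cell_integral hL2 n j m k)]
  -- Step 2: switch to `P = 2 ^ j` as an opaque quantity
  set n' := n / 2 ^ j with hn'
  set P := 2 ^ j with hP
  have hPR : (2 : ℝ) ^ j = (P : ℝ) := by rw [hP]; push_cast; ring
  have hPZ : (2 : ℤ) ^ j = (P : ℤ) := by rw [hP]; push_cast; ring
  simp only [hPR, hPZ]
  have hνm : ν ≤ m := by omega
  -- Step 3: the two reindexed sums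
  have key1 : ∑ k ∈ Finset.range P,
      (2 : ℝ) ^ (-(j : ℝ) / 2) * walsh n ((k : ℝ) / (P : ℝ)) *
        ∫ x in (0:ℝ)..1, φ (x + ((k : ℝ) - m)) * walsh n' x
      = ∑ l ∈ Finset.Icc (-(ν : ℤ) + 1) ((P : ℤ) - m - 1),
        (2 : ℝ) ^ (-(j : ℝ) / 2) * walsh n (((l : ℝ) + m) / (P : ℝ)) *
          ∫ x in (0:ℝ)..1, φ (x + (l : ℝ)) * walsh n' x := by
    have hbij : ∑ k ∈ Finset.range P,
        (2 : ℝ) ^ (-(j : ℝ) / 2) * walsh n ((k : ℝ) / (P : ℝ)) *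
          ∫ x in (0:ℝ)..1, φ (x + ((k : ℝ) - m)) * walsh n' x
        = ∑ l ∈ Finset.Icc (-(m : ℤ)) ((P : ℤ) - m - 1),
          (2 : ℝ) ^ (-(j : ℝ) / 2) * walsh n (((l : ℝ) + m) / (P : ℝ)) *
            ∫ x in (0:ℝ)..1, φ (x + (l : ℝ)) * walsh n' x := by
      refine Finset.sum_nbij' (fun k : ℕ => (k : ℤ) - m) (fun l : ℤ => (l + m).toNat) ?_ ?_ ?_ ?_ ?_
      · intro a ha
        simp only [Finset.mem_range] at ha
        simp only [Finset.mem_Icc]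
        omega
      · intro a ha
        simp only [Finset.mem_Icc] at ha
        simp only [Finset.mem_range]
        omega
      · intro a ha
        simp only [Finset.mem_range] at ha
        show ((a : ℤ) - m + m).toNat = a
        omega
      · intro a ha
        simp only [Finset.mem_Icc] at ha
        show (((a + m).toNat : ℤ)) - m = a
        omega
      · intro a ha
        rw [show (((a : ℤ) - (m : ℤ) : ℤ) : ℝ) = (a : ℝ) - m by push_cast; ring,
          show (a : ℝ) - (m : ℝ) + m = (a : ℝ) by ring]
    rw [hbij]
    refine (Finset.sum_subset (Finset.Icc_subset_Icc (by omega) le_rfl) ?_).symm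
    intro l hl hnl
    simp only [Finset.mem_Icc] at hl hnl
    have hlle : l ≤ -(ν : ℤ) := by omega
    have hcast : (l : ℝ) ≤ -(ν : ℝ) := by exact_mod_cast hlle
    rw [integral_supp_zero hsupp n' (l : ℝ) (Or.inl hcast), mul_zero]
  have key2 : ∑ k ∈ Finset.range P,
      (2 : ℝ) ^ (-(j : ℝ) / 2) * walsh n ((k : ℝ) / (P : ℝ)) *
        ∫ x in (0:ℝ)..1, φ (x + ((k : ℝ) - m + (P : ℝ))) * walsh n' x
      = ∑ l ∈ Finset.Icc ((P : ℤ) - m) ((ν : ℤ) - 1),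
        (2 : ℝ) ^ (-(j : ℝ) / 2) * walsh n (((l : ℝ) + m - (P : ℝ)) / (P : ℝ)) *
          ∫ x in (0:ℝ)..1, φ (x + (l : ℝ)) * walsh n' x := by
    have hbij : ∑ k ∈ Finset.range P,
        (2 : ℝ) ^ (-(j : ℝ) / 2) * walsh n ((k : ℝ) / (P : ℝ)) *
          ∫ x in (0:ℝ)..1, φ (x + ((k : ℝ) - m + (P : ℝ))) * walsh n' x
        = ∑ l ∈ Finset.Icc ((P : ℤ) - m) (2 * (P : ℤ) - m - 1),
          (2 : ℝ) ^ (-(j : ℝ) / 2) * walsh n (((l : ℝ) + m - (P : ℝ)) / (P : ℝ)) *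
            ∫ x in (0:ℝ)..1, φ (x + (l : ℝ)) * walsh n' x := by
      refine Finset.sum_nbij' (fun k : ℕ => (k : ℤ) + P - m) (fun l : ℤ => (l + m - P).toNat) ?_ ?_ ?_ ?_ ?_
      · intro a ha
        simp only [Finset.mem_range] at ha
        simp only [Finset.mem_Icc]
        omega
      · intro a ha
        simp only [Finset.mem_Icc] at ha
        simp only [Finset.mem_range]
        omega
      · intro a ha
        simp only [Finset.mem_range] at ha
        show ((a : ℤ) + P - m + m - P).toNat = a
        omega
      · intro a ha
        simp only [Finset.mem_Icc] at ha
        show (((a + m - P).toNat : ℤ)) + P - m = a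
        omega
      · intro a ha
        rw [show (((a : ℤ) + (P : ℤ) - m : ℤ) : ℝ) = (a : ℝ) - m + (P : ℝ) by push_cast; ring,
          show (a : ℝ) - (m : ℝ) + (P : ℝ) + m - (P : ℝ) = (a : ℝ) by ring]
    rw [hbij]
    refine (Finset.sum_subset (Finset.Icc_subset_Icc le_rfl (by omega)) ?_).symm
    intro l hl hnl
    simp only [Finset.mem_Icc] at hl hnl
    have hlle : (ν : ℤ) ≤ l := by omega
    have hcast : (ν : ℝ) ≤ (l : ℝ) := by exact_mod_cast hlle
    rw [integral_supp_zero hsupp n' (l : ℝ) (Or.inr hcast), mul_zero]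
  simp only [mul_add, Finset.sum_add_distrib]
  rw [key1, key2]
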